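/- Let D be a directed graph with source s and target t, |V(D) \ {s,t}| = n. Then any collection of n+1 directed s–t paths each of length at most k has a rainbow s–t path of length at most k. -/

import Mathlib

/-- The list of (directed) edges of a path given as a list of vertices. -/
def pathEdges {V : Type*} (l : List V) : List (V × V) := l.zip l.tail

/-- `l` is a directed `s`–`t` path in the digraph `D`. -/
def IsSTPath {V : Type*} (D : V → V → Prop) (s t : V) (l : List V) : Prop :=
  l.Chain' D ∧ l.head? = some s ∧ l.getLast? = some t ∧ l.Nodup

namespace RainbowAux

variable {V : Type*}

lemma pathEdges_nil : pathEdges ([] : List V) = [] := rfl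
lemma pathEdges_single (a : V) : pathEdges [a] = [] := rfl
lemma pathEdges_cons_cons (a b : V) (l : List V) :
    pathEdges (a :: b :: l) = (a, b) :: pathEdges (b :: l) := rfl

lemma length_pathEdges (l : List V) : (pathEdges l).length = l.length - 1 := by
  simp [pathEdges, List.length_zip, List.length_tail]

lemma pathEdges_append {A B : List V} (hA : A ≠ []) (hB : B ≠ []) :
    pathEdges (A ++ B) = pathEdges A ++ (A.getLast hA, B.head hB) :: pathEdges B := by
  induction A with
  | nil => exact absurd rfl hA
  | cons a A ih =>
    cases A with
    | nil =>
      cases B with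
      | nil => exact absurd rfl hB
      | cons b B => simp [pathEdges_cons_cons, pathEdges_single]
    | cons a' A' =>
      have h' : (a' :: A') ≠ [] := by simp
      have : (a :: a' :: A') ++ B = a :: a' :: (A' ++ B) := by simp
      rw [this, pathEdges_cons_cons]
      have h2 : a' :: (A' ++ B) = (a' :: A') ++ B := by simp
      rw [h2, ih h', pathEdges_cons_cons]
      simp [List.getLast_cons h']

lemma mem_pathEdges {l : List V} {e : V × V} (h : e ∈ pathEdges l) :
    e.1 ∈ l ∧ e.2 ∈ l.tail := by
  obtain ⟨x, y⟩ := e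
  exact List.of_mem_zip h

lemma chain'_iff_pathEdges {D : V → V → Prop} {l : List V} :
    l.Chain' D ↔ ∀ e ∈ pathEdges l, D e.1 e.2 := by
  show l.IsChain D ↔ _
  induction l with
  | nil => simp [pathEdges_nil]
  | cons a l ih =>
    cases l with
    | nil => simp [pathEdges_single]
    | cons b l' =>
      rw [List.isChain_cons_cons, pathEdges_cons_cons]
      simp only [List.mem_cons]
      constructor
      · rintro ⟨h1, h2⟩ e (rfl | he)
        · exact h1
        · exact ih.1 h2 e he
      · intro h
        exact ⟨h (a, b) (Or.inl rfl), ih.2 fun e he => h e (Or.inr he)⟩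

lemma pathEdges_prefix {l₁ l₂ : List V} (h : l₁ <+: l₂) :
    ∀ e ∈ pathEdges l₁, e ∈ pathEdges l₂ := by
  obtain ⟨r, rfl⟩ := h
  intro e he
  cases h1 : l₁ with
  | nil => subst h1; simp [pathEdges_nil] at he
  | cons a A =>
    cases h2 : r with
    | nil => subst h1 h2; simpa using he
    | cons b B =>
      subst h1 h2
      rw [pathEdges_append (by simp) (by simp)]
      exact List.mem_append_left _ he

lemma exists_snd_of_mem_dropLast {l : List V} {v : V} (h : v ∈ l.dropLast) :
    ∃ w, (v, w) ∈ pathEdges l := by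
  induction l with
  | nil => simp at h
  | cons a l ih =>
    cases l with
    | nil => simp at h
    | cons b l' =>
      rw [List.dropLast_cons₂, List.mem_cons] at h
      rcases h with rfl | h
      · exact ⟨b, by rw [pathEdges_cons_cons]; exact List.mem_cons_self⟩
      · obtain ⟨w, hw⟩ := ih h
        exact ⟨w, by rw [pathEdges_cons_cons]; exact List.mem_cons_of_mem _ hw⟩

open Classical in
noncomputable def takeUntil (u : V) : List V → List V
  | [] => []
  | a :: l => if a = u then [] else a :: takeUntil u l

lemma takeUntil_cons_of_ne {u a : V} (l : List V) (h : a ≠ u) :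
    takeUntil u (a :: l) = a :: takeUntil u l := by
  simp [takeUntil, h]

lemma takeUntil_ne {u : V} : ∀ {l : List V}, ∀ x ∈ takeUntil u l, x ≠ u := by
  intro l
  induction l with
  | nil => simp [takeUntil]
  | cons a l ih =>
    by_cases h : a = u
    · simp [takeUntil, h]
    · rw [takeUntil_cons_of_ne l h]
      intro x hx
      rcases List.mem_cons.1 hx with rfl | hx
      · exact h
      · exact ih x hx

lemma takeUntil_prefix (u : V) : ∀ (l : List V), takeUntil u l <+: l := by
  intro l
  induction l with
  | nil => simp [takeUntil]
  | cons a l ih =>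
    by_cases h : a = u
    · simp [takeUntil, h]
    · rw [takeUntil_cons_of_ne l h]
      exact (List.prefix_cons_inj a).2 ih

lemma takeUntil_eq_of_not_mem {u : V} : ∀ {l : List V}, u ∉ l → takeUntil u l = l := by
  intro l
  induction l with
  | nil => simp [takeUntil]
  | cons a l ih =>
    intro h
    have ha : a ≠ u := fun e => h (by simp [e])
    rw [takeUntil_cons_of_ne l ha, ih (fun hm => h (List.mem_cons_of_mem _ hm))]

lemma takeUntil_split {u : V} : ∀ {l : List V}, u ∈ l → ∃ B, l = takeUntil u l ++ u :: B := by
  intro l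
  induction l with
  | nil => simp
  | cons a l ih =>
    intro h
    by_cases ha : a = u
    · subst ha
      exact ⟨l, by simp [takeUntil]⟩
    · rcases List.mem_cons.1 h with rfl | h
      · exact absurd rfl ha
      · obtain ⟨B, hB⟩ := ih h
        exact ⟨B, by rw [takeUntil_cons_of_ne l ha]; simpa using hB⟩

lemma length_le_two {s t : V} {l : List V} (hnd : l.Nodup)
    (h : ∀ x ∈ l, x = s ∨ x = t) : l.length ≤ 2 := by
  match l with
  | [] => simp
  | [a] => simp
  | [a, b] => simp
  | a :: b :: c :: r =>
    exfalso
    simp only [List.nodup_cons, List.mem_cons] at hnd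
    have hab : a ≠ b := fun e => hnd.1 (Or.inl e)
    have hac : a ≠ c := fun e => hnd.1 (Or.inr (Or.inl e))
    have hbc : b ≠ c := fun e => hnd.2.1 (Or.inl e)
    have ha := h a (by simp)
    have hb := h b (by simp)
    have hc := h c (by simp)
    rcases ha with rfl | rfl <;> rcases hb with rfl | rfl <;> rcases hc with rfl | rfl <;>
      simp_all

lemma isSTPath_struct {D : V → V → Prop} {s t : V} {l : List V}
    (h : IsSTPath D s t l) (h2 : 2 ≤ l.length) :
    ∃ M, l = s :: M ++ [t] ∧ s ∉ M ∧ t ∉ M ∧ s ≠ t ∧ M.Nodup := by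
  obtain ⟨hch, hhd, hlast, hnd⟩ := h
  cases l with
  | nil => simp at hhd
  | cons a l' =>
    have ha : a = s := by simpa using hhd
    subst ha
    have hl' : l' ≠ [] := by
      intro e; subst e; simp at h2
    have h5 : (a :: l').getLast (by simp) = t := by
      have h6 := List.getLast?_eq_getLast (l := a :: l') (by simp)
      rw [hlast] at h6
      exact (Option.some.inj h6).symm
    have hL : l'.getLast hl' = t := by
      rw [← List.getLast_cons hl']
      exact h5
    have hdec : l' = l'.dropLast ++ [t] := by
      conv_lhs => rw [← List.dropLast_append_getLast hl']
      rw [hL]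
    have hndl' := (List.nodup_cons.1 hnd).2
    refine ⟨l'.dropLast, ?_, ?_, ?_, ?_, ?_⟩
    · exact congrArg (List.cons a) hdec
    · intro hs
      exact (List.nodup_cons.1 hnd).1 (List.dropLast_subset _ hs)
    · intro htm
      have hnd' := hndl'
      rw [hdec, List.nodup_append] at hnd'
      exact hnd'.2.2 t htm t (by simp) rfl
    · intro hst
      apply (List.nodup_cons.1 hnd).1
      rw [hst, ← hL]
      exact List.getLast_mem hl'
    · exact List.Nodup.sublist (List.dropLast_sublist l') hndl'

end RainbowAux

namespace RainbowAux

variable {V : Type*}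

/-- The conclusion form carried through the induction. -/
def Concl (D : V → V → Prop) (s t : V) {N : ℕ} (P : Fin N → List V) : Prop :=
  ∃ Q : List V, IsSTPath D s t Q ∧ ∃ c : V × V → Fin N,
    Set.InjOn c {e | e ∈ pathEdges Q} ∧
    (∀ e ∈ pathEdges Q, e ∈ pathEdges (P (c e))) ∧
    (∀ e ∈ pathEdges Q, e.2 = t → (pathEdges Q).length ≤ (pathEdges (P (c e))).length)

lemma aux_triv {D : V → V → Prop} {s t : V} {N : ℕ} (P : Fin (N + 1) → List V)
    (m : Fin (N + 1)) (hPm : IsSTPath D s t (P m))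
    (h1 : (pathEdges (P m)).length ≤ 1) : Concl D s t P := by
  refine ⟨P m, hPm, fun _ => m, ?_, fun e he => he, fun e _ _ => le_rfl⟩
  intro e₁ h₁ e₂ h₂ _
  simp only [Set.mem_setOf_eq] at h₁ h₂
  cases hl : pathEdges (P m) with
  | nil => rw [hl] at h₁; simp at h₁
  | cons a tl =>
    rw [hl] at h₁ h₂ h1
    have htl : tl = [] := by
      simp only [List.length_cons] at h1
      exact List.eq_nil_of_length_eq_zero (by omega)
    subst htl
    simp only [List.mem_singleton] at h₁ h₂
    rw [h₁, h₂]

lemma assemble {D : V → V → Prop} {s t : V} {N : ℕ} (P : Fin N → List V)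
    (Z : List V) (hZne : Z ≠ []) (hhead : Z.head? = some s) (hnd : Z.Nodup)
    (hZt : ∀ v ∈ Z, v ≠ t)
    (hchain : ∀ e ∈ pathEdges Z, D e.1 e.2)
    (mlast : Fin N)
    (hmlast : (Z.getLast hZne, t) ∈ pathEdges (P mlast))
    (hDlast : D (Z.getLast hZne) t)
    (hbound : (pathEdges Z).length + 1 ≤ (pathEdges (P mlast)).length)
    (col : V × V → Fin N)
    (hcolinj : Set.InjOn col {e | e ∈ pathEdges Z})
    (hcolmem : ∀ e ∈ pathEdges Z, e ∈ pathEdges (P (col e)))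
    (hcolne : ∀ e ∈ pathEdges Z, col e ≠ mlast) :
    Concl D s t P := by
  classical
  have hpe : pathEdges (Z ++ [t]) = pathEdges Z ++ [(Z.getLast hZne, t)] := by
    rw [pathEdges_append hZne (by simp : ([t] : List V) ≠ [])]
    simp [pathEdges_single]
  have hsnd : ∀ e ∈ pathEdges Z, e.2 ≠ t :=
    fun e he => hZt _ (List.mem_of_mem_tail (mem_pathEdges he).2)
  have hmemQ : ∀ e, e ∈ pathEdges (Z ++ [t]) ↔
      e ∈ pathEdges Z ∨ e = (Z.getLast hZne, t) := by
    intro e; rw [hpe]; simp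
  refine ⟨Z ++ [t], ⟨?_, ?_, ?_, ?_⟩, fun e => if e.2 = t then mlast else col e,
    ?_, ?_, ?_⟩
  · rw [chain'_iff_pathEdges]
    intro e he
    rcases (hmemQ e).1 he with h | rfl
    · exact hchain e h
    · exact hDlast
  · cases Z with
    | nil => exact absurd rfl hZne
    | cons a Z' => simpa using hhead
  · exact List.getLast?_concat
  · rw [List.nodup_append]
    exact ⟨hnd, List.nodup_singleton t, fun v hv b hb e => hZt v hv (e.trans (by simpa using hb))⟩
  · intro e₁ h₁ e₂ h₂ hc
    simp only [Set.mem_setOf_eq] at h₁ h₂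
    dsimp only at hc
    rcases (hmemQ e₁).1 h₁ with he₁ | rfl <;> rcases (hmemQ e₂).1 h₂ with he₂ | rfl
    · rw [if_neg (hsnd _ he₁), if_neg (hsnd _ he₂)] at hc
      exact hcolinj he₁ he₂ hc
    · rw [if_neg (hsnd _ he₁), if_pos rfl] at hc
      exact absurd hc (hcolne _ he₁)
    · rw [if_pos rfl, if_neg (hsnd _ he₂)] at hc
      exact absurd hc.symm (hcolne _ he₂)
    · rfl
  · intro e he
    dsimp only
    rcases (hmemQ e).1 he with h | rfl
    · rw [if_neg (hsnd _ h)]; exact hcolmem e h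
    · rw [if_pos rfl]; exact hmlast
  · intro e he h2
    dsimp only
    rcases (hmemQ e).1 he with h | rfl
    · exact absurd h2 (hsnd _ h)
    · rw [if_pos rfl, hpe]
      simp only [List.length_append, List.length_singleton]
      exact hbound

end RainbowAux

namespace RainbowAux

universe u

theorem aux : ∀ (n : ℕ) {V : Type u} (D : V → V → Prop) (s t : V) (S : Set V),
    S.Finite → S.ncard ≤ n → ∀ P : Fin (n + 1) → List V,
    (∀ i, IsSTPath D s t (P i)) → (∀ i, ∀ v ∈ P i, v = s ∨ v = t ∨ v ∈ S) →
    Concl D s t P := by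
  intro n
  induction n with
  | zero =>
    intro V D s t S hfin hcard P hP hsub
    have hS : S = ∅ := (Set.ncard_eq_zero hfin).1 (Nat.le_antisymm hcard (Nat.zero_le _))
    have hmem : ∀ x ∈ P 0, x = s ∨ x = t := by
      intro x hx
      rcases hsub 0 x hx with h | h | h
      · exact Or.inl h
      · exact Or.inr h
      · rw [hS] at h; exact absurd h (Set.notMem_empty x)
    have hlen : (P 0).length ≤ 2 := length_le_two (hP 0).2.2.2 hmem
    apply aux_triv P 0 (hP 0)
    rw [length_pathEdges]
    omega
  | succ n IH =>
    intro V D s t S hfin hcard P hP hsub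
    classical
    by_cases hA : ∃ m, (pathEdges (P m)).length ≤ 1
    · obtain ⟨m, hm⟩ := hA
      exact aux_triv P m (hP m) hm
    push_neg at hA
    have hA2 : ∀ m, 2 ≤ (P m).length := by
      intro m; have := hA m; rw [length_pathEdges] at this; omega
    have hstruct := fun m => isSTPath_struct (hP m) (hA2 m)
    choose M hPM hsM htM hst hMnd using hstruct
    have hMne : ∀ m, M m ≠ [] := by
      intro m hnil
      have := hA m
      rw [length_pathEdges, hPM m, hnil] at this
      simp at this
    have hlenP : ∀ m, (P m).length = (M m).length + 2 := by
      intro m; rw [hPM m]; simp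
    obtain ⟨j, hj⟩ := Finite.exists_max (fun i : Fin (n + 2) => (P i).length)
    set u := (M j).getLast (hMne j) with hu_def
    have huM : u ∈ M j := List.getLast_mem (hMne j)
    have hus : u ≠ s := fun e => hsM j (e ▸ huM)
    have hut : u ≠ t := fun e => htM j (e ▸ huM)
    have huS : u ∈ S := by
      have hmem : u ∈ P j := by
        rw [hPM j]
        exact List.mem_cons_of_mem _ (List.mem_append_left _ huM)
      rcases hsub j u hmem with h | h | h
      · exact absurd h hus
      · exact absurd h hut
      · exact h
    have hD : ∀ m, ∀ e ∈ pathEdges (P m), D e.1 e.2 :=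
      fun m => chain'_iff_pathEdges.1 (hP m).1
    have hPm_eq : ∀ m, P m = (s :: M m) ++ [t] := by
      intro m; rw [hPM m]
    have hpePm : ∀ m, pathEdges (P m)
        = pathEdges (s :: M m) ++ [((M m).getLast (hMne m), t)] := by
      intro m
      rw [hPm_eq m,
        pathEdges_append (by simp : s :: M m ≠ []) (by simp : ([t] : List V) ≠ [])]
      rw [List.getLast_cons (hMne m)]
      simp [pathEdges_single]
    have hlastmem : ∀ m, ((M m).getLast (hMne m), t) ∈ pathEdges (P m) := by
      intro m; rw [hpePm m]; exact List.mem_append_right _ (by simp)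
    have hsMnd : ∀ m, (s :: M m).Nodup := by
      intro m
      have := (hP m).2.2.2
      rw [hPm_eq m] at this
      exact (List.nodup_append.1 this).1
    -- the contracted digraph and truncated paths
    set D' : V → V → Prop := fun x y => x ≠ t ∧ x ≠ u ∧ (D x y ∨ (y = u ∧ D x t))
      with hD'_def
    set tU : Fin (n + 1) → List V := fun i => takeUntil u (s :: M (j.succAbove i))
      with htU_def
    set P' : Fin (n + 1) → List V := fun i => tU i ++ [u] with hP'_def
    have htUc : ∀ i, tU i = s :: takeUntil u (M (j.succAbove i)) :=
      fun i => takeUntil_cons_of_ne _ (Ne.symm hus)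
    have htUne : ∀ i, tU i ≠ [] := by intro i; rw [htUc i]; simp
    have htUpre : ∀ i, tU i <+: (s :: M (j.succAbove i)) :=
      fun i => takeUntil_prefix u _
    have hsMpre : ∀ m, (s :: M m) <+: P m := by
      intro m; rw [hPm_eq m]; exact List.prefix_append _ _
    have htUmem : ∀ i, ∀ v ∈ tU i,
        (v = s ∨ v ∈ M (j.succAbove i)) ∧ v ≠ u ∧ v ≠ t := by
      intro i v hv
      have hv1 : v ∈ s :: M (j.succAbove i) := (htUpre i).subset hv
      have hvu : v ≠ u := takeUntil_ne v hv
      refine ⟨List.mem_cons.1 hv1, hvu, ?_⟩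
      rcases List.mem_cons.1 hv1 with rfl | h
      · exact hst (j.succAbove i)
      · exact fun e => htM _ (e ▸ h)
    have htUedge : ∀ i, ∀ e ∈ pathEdges (tU i), e ∈ pathEdges (P (j.succAbove i)) :=
      fun i e he =>
        pathEdges_prefix (hsMpre _) _ (pathEdges_prefix (htUpre i) _ he)
    have hpeP' : ∀ i, pathEdges (P' i)
        = pathEdges (tU i) ++ [((tU i).getLast (htUne i), u)] := by
      intro i
      rw [hP'_def]
      dsimp only
      rw [pathEdges_append (htUne i) (by simp : ([u] : List V) ≠ [])]
      simp [pathEdges_single]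
    have hjointD : ∀ i, D ((tU i).getLast (htUne i)) u ∨
        D ((tU i).getLast (htUne i)) t ∧ u ∉ M (j.succAbove i) := by
      intro i
      by_cases hum : u ∈ M (j.succAbove i)
      · left
        obtain ⟨B, hB⟩ := takeUntil_split
          (show u ∈ s :: M (j.succAbove i) from List.mem_cons_of_mem _ hum)
        have hPdec : P (j.succAbove i) = tU i ++ (u :: (B ++ [t])) := by
          rw [hPm_eq (j.succAbove i)]
          rw [show s :: M (j.succAbove i) = tU i ++ u :: B from hB]
          simp
        have hmem2 : ((tU i).getLast (htUne i), u) ∈ pathEdges (P (j.succAbove i)) := by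
          rw [hPdec, pathEdges_append (htUne i) (by simp)]
          exact List.mem_append_right _ (by simp)
        exact hD _ _ hmem2
      · right
        refine ⟨?_, hum⟩
        have hnu : u ∉ s :: M (j.succAbove i) := by
          intro h
          rcases List.mem_cons.1 h with h | h
          · exact hus h
          · exact hum h
        have htUeq : tU i = s :: M (j.succAbove i) := takeUntil_eq_of_not_mem hnu
        have h3 : (tU i).getLast (htUne i) = (M (j.succAbove i)).getLast (hMne _) := by
          have h2 : (s :: M (j.succAbove i)).getLast? = some ((tU i).getLast (htUne i)) := by
            rw [← htUeq]; exact List.getLast?_eq_getLast _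
          rw [List.getLast?_eq_getLast (by simp : s :: M (j.succAbove i) ≠ [])] at h2
          have h4 := Option.some.inj h2
          rw [List.getLast_cons (hMne _)] at h4
          exact h4.symm
        rw [h3]
        exact hD _ _ (hlastmem _)
    have hgl_tU : ∀ i, ((tU i).getLast (htUne i)) ∈ tU i := fun i => List.getLast_mem _
    have hP'path : ∀ i, IsSTPath D' s u (P' i) := by
      intro i
      refine ⟨?_, ?_, ?_, ?_⟩
      · rw [chain'_iff_pathEdges]
        intro e he
        rw [hpeP' i] at he
        rcases List.mem_append.1 he with h | h
        · have h1 := (mem_pathEdges h).1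
          obtain ⟨_, hvu, hvt⟩ := htUmem i _ h1
          exact ⟨hvt, hvu, Or.inl (hD _ _ (htUedge i _ h))⟩
        · have h2 : e = ((tU i).getLast (htUne i), u) := by simpa using h
          subst h2
          obtain ⟨_, hvu, hvt⟩ := htUmem i _ (hgl_tU i)
          refine ⟨hvt, hvu, ?_⟩
          rcases hjointD i with h3 | ⟨h3, _⟩
          · exact Or.inl h3
          · exact Or.inr ⟨rfl, h3⟩
      · rw [hP'_def]
        dsimp only
        rw [htUc i]
        rfl
      · rw [hP'_def]
        exact List.getLast?_concat
      · rw [hP'_def]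
        dsimp only
        rw [List.nodup_append]
        refine ⟨?_, List.nodup_singleton u, ?_⟩
        · exact List.Nodup.sublist (htUpre i).sublist (hsMnd _)
        · intro v hv b hb e
          exact (htUmem i v hv).2.1 (e.trans (by simpa using hb))
    have hsub' : ∀ i, ∀ v ∈ P' i, v = s ∨ v = u ∨ v ∈ S \ {u} := by
      intro i v hv
      rw [hP'_def] at hv
      dsimp only at hv
      rcases List.mem_append.1 hv with h | h
      · obtain ⟨hsm, hvu, hvt⟩ := htUmem i _ h
        rcases hsm with rfl | hvM
        · exact Or.inl rfl
        · have := hsub (j.succAbove i) v (by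
            rw [hPm_eq _]
            exact List.mem_append_left _ (List.mem_cons_of_mem _ hvM))
          rcases this with h1 | h1 | h1
          · exact Or.inl h1
          · exact absurd h1 hvt
          · exact Or.inr (Or.inr ⟨h1, hvu⟩)
      · exact Or.inr (Or.inl (by simpa using h))
    have hcard' : (S \ {u}).ncard ≤ n := by
      rw [Set.ncard_diff_singleton_of_mem huS]
      omega
    obtain ⟨Q', hQ'path, c', hinj', hmem', hinv'⟩ :=
      IH D' s u (S \ {u}) hfin.diff hcard' P' hP'path hsub'
    obtain ⟨hQch, hQhd, hQlast?, hQnd⟩ := hQ'path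
    have hQ'ne : Q' ≠ [] := by
      intro e; rw [e] at hQhd; simp at hQhd
    have hQgl : Q'.getLast hQ'ne = u := by
      have := List.getLast?_eq_getLast (l := Q') hQ'ne
      rw [hQlast?] at this
      exact (Option.some.inj this).symm
    set Y := Q'.dropLast with hY_def
    have hQeq : Q' = Y ++ [u] := by
      rw [hY_def, ← hQgl]
      exact (List.dropLast_append_getLast hQ'ne).symm
    have hYne : Y ≠ [] := by
      intro e
      rw [hQeq, e] at hQhd
      simp at hQhd
      exact hus hQhd
    have hYprop : ∀ v ∈ Y, v ≠ t ∧ v ≠ u := by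
      intro v hv
      obtain ⟨w, hw⟩ := exists_snd_of_mem_dropLast (hY_def ▸ hv)
      have h1 := chain'_iff_pathEdges.1 hQch _ hw
      exact ⟨h1.1, h1.2.1⟩
    set x := Y.getLast hYne with hx_def
    have hpeQ' : pathEdges Q' = pathEdges Y ++ [(x, u)] := by
      conv_lhs => rw [hQeq]
      rw [pathEdges_append hYne (by simp : ([u] : List V) ≠ [])]
      simp [pathEdges_single, hx_def]
    have hestar : (x, u) ∈ pathEdges Q' := by
      rw [hpeQ']; exact List.mem_append_right _ (by simp)
    set c₀ := c' (x, u) with hc0_def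
    set m₀ := j.succAbove c₀ with hm0_def
    have hxu_in_P' : (x, u) ∈ pathEdges (P' c₀) := hmem' _ hestar
    have hxgl : x = (tU c₀).getLast (htUne c₀) := by
      rw [hpeP' c₀] at hxu_in_P'
      rcases List.mem_append.1 hxu_in_P' with h | h
      · exfalso
        have h2 := (mem_pathEdges h).2
        have h3 : u ∈ tU c₀ := List.mem_of_mem_tail h2
        exact takeUntil_ne u h3 rfl
      · have : (x, u) = ((tU c₀).getLast (htUne c₀), u) := by simpa using h
        exact congrArg Prod.fst this
    have hlen1 : (pathEdges Q').length ≤ (pathEdges (P' c₀)).length := hinv' _ hestar rfl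
    have hYedge : ∀ e ∈ pathEdges Y, e.2 ∈ Y :=
      fun e he => List.mem_of_mem_tail (mem_pathEdges he).2
    have hliftmem : ∀ e ∈ pathEdges Q', e.2 ≠ u →
        e ∈ pathEdges (P (j.succAbove (c' e))) := by
      intro e he hne
      have h1 := hmem' _ he
      rw [hpeP' (c' e)] at h1
      rcases List.mem_append.1 h1 with h | h
      · exact htUedge _ _ h
      · exfalso
        apply hne
        have : e = ((tU (c' e)).getLast (htUne _), u) := by simpa using h
        rw [this]
    -- length bookkeeping
    have hlenQ' : Q'.length = Y.length + 1 := by rw [hQeq]; simp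
    have hlenP'c0 : (P' c₀).length = (tU c₀).length + 1 := by rw [hP'_def]; simp
    by_cases hum : u ∈ M m₀
    · -- genuine case : extend Q' by the edge (u, t) colored j
      obtain ⟨B, hB⟩ := takeUntil_split
        (show u ∈ s :: M m₀ from List.mem_cons_of_mem _ hum)
      have hPdec : P m₀ = tU c₀ ++ (u :: (B ++ [t])) := by
        rw [hPm_eq m₀, show s :: M m₀ = tU c₀ ++ u :: B from hB]
        simp
      have hxu_mem : (x, u) ∈ pathEdges (P m₀) := by
        rw [hPdec, pathEdges_append (htUne c₀) (by simp), ← hxgl]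
        exact List.mem_append_right _ (by simp)
      have hallmem : ∀ e ∈ pathEdges Q', e ∈ pathEdges (P (j.succAbove (c' e))) := by
        intro e he
        by_cases h2 : e.2 = u
        · have hexu : e = (x, u) := by
            rw [hpeQ'] at he
            rcases List.mem_append.1 he with h | h
            · exact absurd h2 (hYprop _ (hYedge e h)).2
            · simpa using h
          rw [hexu, ← hc0_def]
          exact hxu_mem
        · exact hliftmem e he h2
      have hchQ' : ∀ e ∈ pathEdges Q', D e.1 e.2 :=
        fun e he => hD _ _ (hallmem e he)
      have hQ't : ∀ v ∈ Q', v ≠ t := by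
        intro v hv
        rw [hQeq] at hv
        rcases List.mem_append.1 hv with h | h
        · exact (hYprop v h).1
        · simp at h; rw [h]; exact hut
      have hfold : takeUntil u (s :: M m₀) = tU c₀ := rfl
      rw [hfold] at hB
      have hlenB := congrArg List.length hB
      simp only [List.length_cons, List.length_append] at hlenB
      have hQlen : 1 ≤ Q'.length := List.length_pos_iff.2 hQ'ne
      have h6 : Q'.length - 1 ≤ (tU c₀).length := by
        rw [length_pathEdges, length_pathEdges, hlenP'c0] at hlen1
        omega
      have hjm := hj m₀
      rw [hlenP m₀, hlenP j] at hjm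
      have hbound : (pathEdges Q').length + 1 ≤ (pathEdges (P j)).length := by
        rw [length_pathEdges, length_pathEdges, hlenP j]
        omega
      have hmlastj : (Q'.getLast hQ'ne, t) ∈ pathEdges (P j) := by
        rw [hQgl, hu_def]
        exact hlastmem j
      have hDlastj : D (Q'.getLast hQ'ne) t := hD _ _ hmlastj
      exact assemble P Q' hQ'ne hQhd hQnd hQ't hchQ' j hmlastj hDlastj hbound
        (fun e => j.succAbove (c' e))
        (fun e₁ h₁ e₂ h₂ hc => hinj' h₁ h₂ (Fin.succAbove_right_injective hc))
        hallmem
        (fun e _ => Fin.succAbove_ne j (c' e))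
    · -- virtual case : the last edge of Q' came from the last edge (x, t) of P m₀
      have hnu : u ∉ s :: M m₀ := by
        intro h
        rcases List.mem_cons.1 h with h | h
        · exact hus h
        · exact hum h
      have htUeq : tU c₀ = s :: M m₀ := takeUntil_eq_of_not_mem hnu
      have hxM : x = (M m₀).getLast (hMne m₀) := by
        have h2 : (s :: M m₀).getLast? = some ((tU c₀).getLast (htUne c₀)) := by
          rw [← htUeq]; exact List.getLast?_eq_getLast _
        rw [List.getLast?_eq_getLast (by simp : s :: M m₀ ≠ [])] at h2
        have h4 := Option.some.inj h2
        rw [List.getLast_cons (hMne m₀)] at h4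
        rw [hxgl, ← h4]
      have hxt_mem : (x, t) ∈ pathEdges (P m₀) := by
        rw [hxM]; exact hlastmem m₀
      have hYsub : ∀ e ∈ pathEdges Y, e ∈ pathEdges Q' := by
        intro e he; rw [hpeQ']; exact List.mem_append_left _ he
      have hYlift : ∀ e ∈ pathEdges Y, e ∈ pathEdges (P (j.succAbove (c' e))) :=
        fun e he => hliftmem e (hYsub e he) (hYprop _ (hYedge e he)).2
      have hchY : ∀ e ∈ pathEdges Y, D e.1 e.2 :=
        fun e he => hD _ _ (hYlift e he)
      have hYhd : Y.head? = some s := by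
        obtain ⟨a, Y', hYY⟩ := List.exists_cons_of_ne_nil hYne
        have h7 := hQhd
        rw [hQeq, hYY] at h7
        simp only [List.cons_append, List.head?_cons, Option.some.injEq] at h7
        rw [hYY, h7]
        rfl
      have hYnd : Y.Nodup := by
        rw [hQeq] at hQnd
        exact (List.nodup_append.1 hQnd).1
      have hYt : ∀ v ∈ Y, v ≠ t := fun v hv => (hYprop v hv).1
      have hYlen : 1 ≤ Y.length := List.length_pos_iff.2 hYne
      have h5 : (tU c₀).length = (M m₀).length + 1 := by rw [htUeq]; simp
      have h6 : Q'.length - 1 ≤ (tU c₀).length := by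
        rw [length_pathEdges, length_pathEdges, hlenP'c0] at hlen1
        omega
      have hbound : (pathEdges Y).length + 1 ≤ (pathEdges (P m₀)).length := by
        rw [length_pathEdges, length_pathEdges, hlenP m₀]
        omega
      have hglYx : (Y.getLast hYne, t) ∈ pathEdges (P m₀) := by
        rw [← hx_def]; exact hxt_mem
      have hcolne : ∀ e ∈ pathEdges Y, j.succAbove (c' e) ≠ m₀ := by
        intro e he hEq
        have h1 : c' e = c₀ := Fin.succAbove_right_injective (hm0_def ▸ hEq)
        have h2 : e = (x, u) := hinj' (hYsub e he) hestar h1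
        have h3 := (hYprop _ (hYedge e he)).2
        rw [h2] at h3
        exact h3 rfl
      exact assemble P Y hYne hYhd hYnd hYt hchY m₀ hglYx (hD _ _ hglYx) hbound
        (fun e => j.succAbove (c' e))
        (fun e₁ h₁ e₂ h₂ hc =>
          hinj' (hYsub _ h₁) (hYsub _ h₂) (Fin.succAbove_right_injective hc))
        hYlift hcolne

end RainbowAux

/-- With `n` inner vertices, `n+1` directed `s`–`t` paths of length at most `k`
have a rainbow `s`–`t` path of length at most `k`. -/
theorem rainbow_path_bounded_length {V : Type*} [Fintype V] (D : V → V → Prop)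
    (s t : V) (hs : ∀ v, ¬ D v s) (ht : ∀ v, ¬ D t v) {n : ℕ}
    (hn : ({v : V | v ≠ s ∧ v ≠ t}).ncard = n) (k : ℕ)
    (P : Fin (n + 1) → List V) (hP : ∀ i, IsSTPath D s t (P i))
    (hlen : ∀ i, (pathEdges (P i)).length ≤ k) :
    ∃ Q : List V, IsSTPath D s t Q ∧ (pathEdges Q).length ≤ k ∧
      ∃ c : V × V → Fin (n + 1),
        Set.InjOn c {e | e ∈ pathEdges Q} ∧
        ∀ e ∈ pathEdges Q, e ∈ pathEdges (P (c e)) := by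
  classical
  obtain ⟨Q, hQ, c, hinj, hmem, hinv⟩ :=
    RainbowAux.aux n D s t {v : V | v ≠ s ∧ v ≠ t} (Set.toFinite _) (le_of_eq hn) P hP
      (by
        intro i v _
        by_cases h1 : v = s
        · exact Or.inl h1
        by_cases h2 : v = t
        · exact Or.inr (Or.inl h2)
        exact Or.inr (Or.inr ⟨h1, h2⟩))
  refine ⟨Q, hQ, ?_, c, hinj, hmem⟩
  rcases Nat.eq_zero_or_pos (pathEdges Q).length with h0 | hpos
  · rw [h0]; exact Nat.zero_le k
  · have hQne : Q ≠ [] := by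
      intro e
      rw [e] at hpos
      simp [RainbowAux.pathEdges_nil] at hpos
    have hQlen2 : 2 ≤ Q.length := by
      rw [RainbowAux.length_pathEdges] at hpos
      omega
    have hdne : Q.dropLast ≠ [] := by
      intro e
      have h3 := congrArg List.length e
      simp only [List.length_dropLast, List.length_nil] at h3
      omega
    have hQgl : Q.getLast hQne = t := by
      have h1 := List.getLast?_eq_getLast (l := Q) hQne
      rw [hQ.2.2.1] at h1
      exact (Option.some.inj h1).symm
    have hQdec : Q = Q.dropLast ++ [t] := by
      rw [← hQgl]
      exact (List.dropLast_append_getLast hQne).symm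
    have hpe2 : pathEdges Q = pathEdges Q.dropLast ++ [(Q.dropLast.getLast hdne, t)] := by
      conv_lhs => rw [hQdec]
      rw [RainbowAux.pathEdges_append hdne (by simp : ([t] : List V) ≠ [])]
      simp [RainbowAux.pathEdges_single]
    have hlast_mem : (Q.dropLast.getLast hdne, t) ∈ pathEdges Q := by
      rw [hpe2]
      exact List.mem_append_right _ (by simp)
    exact le_trans (hinv _ hlast_mem rfl) (hlen _)
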